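/- Online gradient descent regret bound: for convex differentiable losses l_t on R^p, the iterates w_{t+1} = w_t - α_t ∇l_t(w_t) with positive stepsizes α_t satisfy, for every w ∈ R^p, Σ_{t=1}^T l_t(w_t) - Σ_{t=1}^T l_t(w) ≤ ||w_1 - w||²/(2α_1) + Σ_{t=2}^T (||w_t - w||²/2)(1/α_t - 1/α_{t-1}) + Σ_{t=1}^T (α_t/2)||∇l_t(w_t)||². -/

import Mathlib

open Finset
open scoped RealInnerProductSpace

lemma grad_first_order {p : ℕ} (f : EuclideanSpace ℝ (Fin p) → ℝ)
    (hc : ConvexOn ℝ Set.univ f) (hd : Differentiable ℝ f)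
    (u v : EuclideanSpace ℝ (Fin p)) :
    f u - f v ≤ ⟪gradient f u, u - v⟫ := by
  set g := gradient f u with hgdef
  have hg : HasFDerivAt f (InnerProductSpace.toDual ℝ _ g) u :=
    (hasGradientAt_iff_hasFDerivAt).mp (hd u).hasGradientAt
  have hA : HasDerivAt (fun s : ℝ => (AffineMap.lineMap u v) s) (v - u) 0 := by
    simp only [AffineMap.lineMap_apply_module']
    simpa using ((hasDerivAt_id (0:ℝ)).smul_const (v - u)).add_const u
  have hφ : HasDerivAt (fun s : ℝ => f ((AffineMap.lineMap u v) s)) ⟪g, v - u⟫ 0 := by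
    have hg' : HasFDerivAt f (InnerProductSpace.toDual ℝ _ g) ((AffineMap.lineMap u v) (0:ℝ)) := by
      simpa [AffineMap.lineMap_apply_zero] using hg
    have := hg'.comp_hasDerivAt 0 hA
    simpa [Function.comp_def] using this
  have hφc : ConvexOn ℝ Set.univ (fun s : ℝ => f ((AffineMap.lineMap u v) s)) := by
    have := hc.comp_affineMap (AffineMap.lineMap u v)
    simpa [Set.preimage_univ, Function.comp_def] using this
  have hslope := hφc.le_slope_of_hasDerivAt (Set.mem_univ (0:ℝ)) (Set.mem_univ (1:ℝ))
    zero_lt_one hφ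
  have hs : slope (fun s : ℝ => f ((AffineMap.lineMap u v) s)) 0 1 = f v - f u := by
    simp [slope_def_field]
  rw [hs] at hslope
  have : u - v = -(v - u) := by abel
  rw [this, inner_neg_right]
  linarith

-- Abel summation / rearrangement of the telescoping stepsize sum
lemma abel_step (a : ℕ → ℝ) (α : ℕ → ℝ) (hα : ∀ t, 0 < α t) (T : ℕ) (hT : 1 ≤ T) :
    ∑ t ∈ Finset.Icc 1 T, (a t - a (t + 1)) / (2 * α t)
      = a 1 / (2 * α 1)
        + ∑ t ∈ Finset.Icc 2 T, (a t / 2) * (1 / α t - 1 / α (t - 1))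
        - a (T + 1) / (2 * α T) := by
  induction T with
  | zero => omega
  | succ n ih =>
    rcases Nat.lt_or_ge n 1 with hn | hn
    · interval_cases n
      have h1 : α 1 ≠ 0 := (hα 1).ne'
      simp [Finset.Icc_self]
      ring
    · have h1 : (1:ℕ) ≤ n + 1 := by omega
      rw [Finset.sum_Icc_succ_top (by omega : 1 ≤ n + 1),
          Finset.sum_Icc_succ_top (by omega : 2 ≤ n + 1), ih hn]
      have hn0 : α n ≠ 0 := (hα n).ne'
      have hn1 : α (n + 1) ≠ 0 := (hα (n + 1)).ne'
      have : n + 1 - 1 = n := by omega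
      rw [this]
      field_simp
      ring

/-- Online gradient descent regret bound for convex differentiable losses. -/
theorem online_gradient_descent_regret
    {p : ℕ} (l : ℕ → EuclideanSpace ℝ (Fin p) → ℝ)
    (hconv : ∀ t, ConvexOn ℝ Set.univ (l t))
    (hdiff : ∀ t, Differentiable ℝ (l t))
    (α : ℕ → ℝ) (hα : ∀ t, 0 < α t)
    (w : ℕ → EuclideanSpace ℝ (Fin p))
    (hupd : ∀ t, w (t + 1) = w t - α t • gradient (l t) (w t))
    (T : ℕ) (hT : 1 ≤ T) (v : EuclideanSpace ℝ (Fin p)) :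
    ∑ t ∈ Finset.Icc 1 T, l t (w t) - ∑ t ∈ Finset.Icc 1 T, l t v ≤
      ‖w 1 - v‖ ^ 2 / (2 * α 1)
      + ∑ t ∈ Finset.Icc 2 T, (‖w t - v‖ ^ 2 / 2) * (1 / α t - 1 / α (t - 1))
      + ∑ t ∈ Finset.Icc 1 T, (α t / 2) * ‖gradient (l t) (w t)‖ ^ 2 := by
  set g : ℕ → EuclideanSpace ℝ (Fin p) := fun t => gradient (l t) (w t) with hg
  set a : ℕ → ℝ := fun t => ‖w t - v‖ ^ 2 with ha
  -- one-step identity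
  have hstep : ∀ t, ⟪g t, w t - v⟫ = (a t - a (t + 1)) / (2 * α t)
      + (α t / 2) * ‖g t‖ ^ 2 := by
    intro t
    have hA : a (t + 1) = a t - 2 * (α t * ⟪g t, w t - v⟫) + (α t) ^ 2 * ‖g t‖ ^ 2 := by
      have : w (t + 1) - v = (w t - v) - α t • g t := by rw [hupd t]; abel
      show ‖w (t + 1) - v‖ ^ 2 = ‖w t - v‖ ^ 2 - 2 * (α t * ⟪g t, w t - v⟫)
        + (α t) ^ 2 * ‖g t‖ ^ 2
      rw [this, norm_sub_sq_real, real_inner_smul_right, norm_smul, real_inner_comm]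
      simp [mul_pow, abs_of_pos (hα t)]
    have hα0 : α t ≠ 0 := (hα t).ne'
    rw [hA]
    field_simp
    ring
  calc ∑ t ∈ Finset.Icc 1 T, l t (w t) - ∑ t ∈ Finset.Icc 1 T, l t v
      = ∑ t ∈ Finset.Icc 1 T, (l t (w t) - l t v) := by rw [Finset.sum_sub_distrib]
    _ ≤ ∑ t ∈ Finset.Icc 1 T, ⟪g t, w t - v⟫ :=
        Finset.sum_le_sum fun t _ => grad_first_order (l t) (hconv t) (hdiff t) (w t) v
    _ = ∑ t ∈ Finset.Icc 1 T, (a t - a (t + 1)) / (2 * α t)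
        + ∑ t ∈ Finset.Icc 1 T, (α t / 2) * ‖g t‖ ^ 2 := by
        rw [← Finset.sum_add_distrib]; exact Finset.sum_congr rfl fun t _ => hstep t
    _ ≤ a 1 / (2 * α 1) + ∑ t ∈ Finset.Icc 2 T, (a t / 2) * (1 / α t - 1 / α (t - 1))
        + ∑ t ∈ Finset.Icc 1 T, (α t / 2) * ‖g t‖ ^ 2 := by
        rw [abel_step a α hα T hT]
        have h1 : 0 ≤ a (T + 1) / (2 * α T) :=
          div_nonneg (by positivity) (by linarith [hα T])
        linarith
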